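/- Let F be a finite field with q elements of odd characteristic, a ∈ F nonzero, and m a positive integer. Let D_m(X,a) = ∑_{j=0}^{⌊m/2⌋} (m/(m-j))·binom(m-j, j)·(-a)^j·X^{m-2j} be the Dickson polynomial, and suppose 2^r exactly divides q²-1. If m is odd, then |{D_m(c,a) : c ∈ F}| = (q-1)/(2·gcd(m,q-1)) + (q+1)/(2·gcd(m,q+1)). -/

import Mathlib

open Polynomial Finset

section Helpers
variable {K : Type*} [Field K]

lemma pow_gcd_eq_one' {x : K} {m n : ℕ} (hx : x ≠ 0) (hm : x ^ m = 1) (hn : x ^ n = 1) :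
    x ^ Nat.gcd m n = 1 := by
  have h := Nat.gcd_eq_gcd_ab m n
  have h2 : (x : K) ^ ((Nat.gcd m n : ℕ) : ℤ) = 1 := by
    rw [h, zpow_add₀ hx, zpow_mul, zpow_mul, zpow_natCast, zpow_natCast, hm, hn, one_zpow,
      one_zpow, one_mul]
  simpa [zpow_natCast] using h2

lemma dickson_eval_add' (b : K) : ∀ (n : ℕ) (u : K), u ≠ 0 →
    (Polynomial.dickson 1 b n).eval (u + b * u⁻¹) = u ^ n + (b * u⁻¹) ^ n
  | 0, u, hu => by
    simp [Polynomial.dickson_zero]; norm_num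
  | 1, u, hu => by simp [Polynomial.dickson_one]
  | n + 2, u, hu => by
    rw [Polynomial.dickson_add_two]
    simp only [Polynomial.eval_sub, Polynomial.eval_mul, Polynomial.eval_X, Polynomial.eval_C,
      dickson_eval_add' b (n + 1) u hu, dickson_eval_add' b n u hu]
    linear_combination (b * (b * u⁻¹) ^ n + b * u ^ n) * mul_inv_cancel₀ hu

lemma card_rootsF {K : Type*} [Field K] [DecidableEq K] [IsAlgClosed K] {n : ℕ} (hn : 0 < n)
    (hn' : (n : K) ≠ 0) {c : K} (hc : c ≠ 0) :
    ((X ^ n - C c : K[X]).roots.toFinset).card = n := by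
  have hsep : (X ^ n - C c : K[X]).Separable := separable_X_pow_sub_C c hn' hc
  have hnodup := (Polynomial.nodup_roots hsep)
  rw [Multiset.toFinset_card_of_nodup hnodup]
  have hsplit : ((X ^ n - C c : K[X]).roots).card = (X ^ n - C c : K[X]).natDegree := by
    rw [← Polynomial.splits_iff_card_roots]
    exact IsAlgClosed.splits _
  rw [hsplit, natDegree_X_pow_sub_C]

lemma mem_rootsF {K : Type*} [Field K] [DecidableEq K] {n : ℕ} (hn : 0 < n) {c x : K} :
    x ∈ (X ^ n - C c : K[X]).roots.toFinset ↔ x ^ n = c := by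
  have hne : (X ^ n - C c : K[X]) ≠ 0 := X_pow_sub_C_ne_zero hn c
  rw [Multiset.mem_toFinset, mem_roots hne]
  simp [IsRoot, sub_eq_zero]

end Helpers

/-- Value set of a Dickson polynomial with nonzero parameter, odd degree case. -/
theorem stmt_9 (F : Type*) [Field F] [Fintype F] [DecidableEq F] (q r m : ℕ)
    (hq : Fintype.card F = q) (hchar : ringChar F ≠ 2) (a : F) (ha : a ≠ 0)
    (hm : 0 < m) (hmodd : Odd m)
    (hr : 2 ^ r ∣ q ^ 2 - 1 ∧ ¬ 2 ^ (r + 1) ∣ q ^ 2 - 1) :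
    ((Finset.univ.image fun c : F => (Polynomial.dickson 1 a m).eval c).card : ℚ)
      = (q - 1) / (2 * Nat.gcd m (q - 1)) + (q + 1) / (2 * Nat.gcd m (q + 1)) := by
  classical
  clear hr
  -- characteristic and cardinality facts
  set p := ringChar F with hpdef
  haveI hcp : CharP F p := ringChar.charP F
  obtain ⟨n, hp, hcard⟩ := FiniteField.card F p
  rw [hq] at hcard
  haveI hfp : Fact p.Prime := ⟨hp⟩
  have hqodd : Odd q := by
    rw [hcard]; exact (hp.odd_of_ne_two hchar).pow
  have hq2 : 2 ≤ q := hq ▸ Fintype.one_lt_card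
  have hq3 : 3 ≤ q := by rcases hqodd with ⟨k, hk⟩; omega
  -- the algebraic closure
  set K := AlgebraicClosure F with hKdef
  set ι : F →+* K := (algebraMap F K : F →+* K) with hιdef
  have hιinj : Function.Injective ι := ι.injective
  haveI hKp : CharP K p := charP_of_injective_ringHom hιinj p
  haveI : ExpChar K p := ExpChar.prime hp
  have frob : ∀ x y : K, (x + y) ^ q = x ^ q + y ^ q := by
    intro x y; rw [hcard]; exact add_pow_expChar_pow x y p (↑n)
  set b : K := ι a with hbdef
  have hb : b ≠ 0 := fun h => ha (hιinj (by rw [map_zero]; exact h))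
  have hbq1 : b ^ (q - 1) = 1 := by
    rw [hbdef, ← map_pow, ← map_one ι]
    congr 1
    rw [← hq]; exact FiniteField.pow_card_sub_one_eq_one a ha
  have hbq : b ^ q = b := by
    rw [hbdef, ← map_pow]; congr 1; rw [← hq]; exact FiniteField.pow_card a
  set d1 := Nat.gcd m (q - 1) with hd1def
  set d2 := Nat.gcd m (q + 1) with hd2def
  have hd1m : d1 ∣ m := Nat.gcd_dvd_left _ _
  have hd1q : d1 ∣ q - 1 := Nat.gcd_dvd_right _ _
  have hd2m : d2 ∣ m := Nat.gcd_dvd_left _ _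
  have hd2q : d2 ∣ q + 1 := Nat.gcd_dvd_right _ _
  have hd1pos : 0 < d1 := Nat.gcd_pos_of_pos_left _ hm
  have hd2pos : 0 < d2 := Nat.gcd_pos_of_pos_left _ hm
  have hodd_dvd : ∀ k : ℕ, k ∣ m → Odd k := by
    intro k hk
    rw [Nat.odd_iff] at hmodd ⊢
    rcases Nat.even_or_odd k with he | ho
    · exfalso
      have : 2 ∣ m := dvd_trans he.two_dvd hk
      omega
    · exact Nat.odd_iff.mp ho
  have hd1odd : Odd d1 := hodd_dvd d1 hd1m
  have hd2odd : Odd d2 := hodd_dvd d2 hd2m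
  have hpq : p ∣ q := hcard ▸ dvd_pow_self p n.pos.ne'
  have hcast : ∀ k : ℕ, (k ∣ (q - 1) ∨ k ∣ (q + 1)) → 0 < k → (k : K) ≠ 0 := by
    intro k hk hkpos
    rw [Ne, CharP.cast_eq_zero_iff K p k]
    intro hpk
    have hone : p ∣ 1 := by
      rcases hk with h | h
      · have h1 : p ∣ q - 1 := hpk.trans h
        have h2 := Nat.dvd_sub hpq h1
        rwa [Nat.sub_sub_self (by omega)] at h2
      · have h1 : p ∣ q + 1 := hpk.trans h
        have h2 := Nat.dvd_sub h1 hpq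
        rwa [(by omega : q + 1 - q = 1)] at h2
    have h1 := Nat.le_of_dvd one_pos hone
    have h2 := hp.two_le
    omega
  -- root sets
  have hq1pos : 0 < q - 1 := by omega
  have hq1cast : ((q - 1 : ℕ) : K) ≠ 0 := hcast _ (Or.inl dvd_rfl) hq1pos
  have hq2cast : ((q + 1 : ℕ) : K) ≠ 0 := hcast _ (Or.inr dvd_rfl) (by omega)
  set A : Finset K := (X ^ (q - 1) - C 1 : K[X]).roots.toFinset with hAdef
  set B : Finset K := (X ^ (q + 1) - C b : K[X]).roots.toFinset with hBdef
  have hmemA : ∀ x : K, x ∈ A ↔ x ^ (q - 1) = 1 := fun x => mem_rootsF hq1pos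
  have hmemB : ∀ x : K, x ∈ B ↔ x ^ (q + 1) = b := fun x => mem_rootsF (by omega)
  have hcardA : A.card = q - 1 := card_rootsF hq1pos hq1cast one_ne_zero
  have hcardB : B.card = q + 1 := card_rootsF (by omega) hq2cast hb
  set SA : Finset K := A.image (· ^ m) with hSAdef
  set SB : Finset K := B.image (· ^ m) with hSBdef
  have hmemSA : ∀ y : K, y ∈ SA ↔ ∃ u : K, u ^ (q - 1) = 1 ∧ u ^ m = y := by
    intro y
    simp only [hSAdef, Finset.mem_image]
    constructor
    · rintro ⟨u, hu, rfl⟩; exact ⟨u, (hmemA u).mp hu, rfl⟩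
    · rintro ⟨u, hu, rfl⟩; exact ⟨u, (hmemA u).mpr hu, rfl⟩
  have hmemSB : ∀ y : K, y ∈ SB ↔ ∃ u : K, u ^ (q + 1) = b ∧ u ^ m = y := by
    intro y
    simp only [hSBdef, Finset.mem_image]
    constructor
    · rintro ⟨u, hu, rfl⟩; exact ⟨u, (hmemB u).mp hu, rfl⟩
    · rintro ⟨u, hu, rfl⟩; exact ⟨u, (hmemB u).mpr hu, rfl⟩
  have hA0 : ∀ u : K, u ^ (q - 1) = 1 → u ≠ 0 := by
    rintro u hu rfl
    rw [zero_pow (by omega)] at hu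
    exact one_ne_zero hu.symm
  have hB0 : ∀ u : K, u ^ (q + 1) = b → u ≠ 0 := by
    rintro u hu rfl
    rw [zero_pow (by omega)] at hu
    exact hb hu.symm
  set c0 : K := b ^ m with hc0def
  have hc0 : c0 ≠ 0 := pow_ne_zero m hb
  have hSA0 : ∀ y ∈ SA, y ≠ 0 := by
    intro y hy
    obtain ⟨u, hu1, rfl⟩ := (hmemSA y).mp hy
    exact pow_ne_zero m (hA0 u hu1)
  have hSB0 : ∀ y ∈ SB, y ≠ 0 := by
    intro y hy
    obtain ⟨u, hu1, rfl⟩ := (hmemSB y).mp hy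
    exact pow_ne_zero m (hB0 u hu1)
  -- sigma closure
  have hsa : ∀ y ∈ SA, c0 * y⁻¹ ∈ SA := by
    intro y hy
    obtain ⟨u, hu1, rfl⟩ := (hmemSA y).mp hy
    have hu0 : u ≠ 0 := hA0 u hu1
    refine (hmemSA _).mpr ⟨b * u⁻¹, ?_, ?_⟩
    · rw [mul_pow, inv_pow, hu1, inv_one, mul_one, hbq1]
    · rw [mul_pow, inv_pow]
  have hsb : ∀ y ∈ SB, c0 * y⁻¹ ∈ SB := by
    intro y hy
    obtain ⟨u, hu1, rfl⟩ := (hmemSB y).mp hy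
    have hu0 : u ≠ 0 := hB0 u hu1
    refine (hmemSB _).mpr ⟨b * u⁻¹, ?_, ?_⟩
    · rw [mul_pow, inv_pow, hu1]
      rw [pow_succ, hbq, mul_inv_cancel_right₀ hb]
    · rw [mul_pow, inv_pow]
  have hEvenq1 : Even (q - 1) := by rcases hqodd with ⟨k, hk⟩; exact ⟨k, by omega⟩
  have hEvenq2 : Even (q + 1) := by rcases hqodd with ⟨k, hk⟩; exact ⟨k + 1, by omega⟩
  -- K3 : common elements square to c0
  have hinter : ∀ y : K, y ∈ SA → y ∈ SB → y ^ 2 = c0 := by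
    intro y hyA hyB
    obtain ⟨u, hu1, huy⟩ := (hmemSA y).mp hyA
    obtain ⟨v, hv1, hvy⟩ := (hmemSB y).mp hyB
    have h1 : y ^ (q - 1) = 1 := by
      rw [← huy, pow_right_comm, hu1, one_pow]
    have h2 : y ^ (q + 1) = c0 := by
      rw [← hvy, pow_right_comm, hv1, hc0def]
    calc y ^ 2 = y ^ (q - 1) * y ^ 2 := by rw [h1, one_mul]
      _ = y ^ (q + 1) := by rw [← pow_add]; congr 1; omega
      _ = c0 := h2
  -- K4 : fixed points in SA lie in SB
  have hAB : ∀ y : K, y ∈ SA → y ^ 2 = c0 → y ∈ SB := by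
    intro y hy hy2
    obtain ⟨u, hu1, rfl⟩ := (hmemSA y).mp hy
    have hu0 : u ≠ 0 := hA0 u hu1
    set ζ : K := u ^ 2 * b⁻¹ with hζdef
    have hζ0 : ζ ≠ 0 := mul_ne_zero (pow_ne_zero _ hu0) (inv_ne_zero hb)
    have hζm : ζ ^ m = 1 := by
      rw [hζdef, mul_pow, inv_pow, pow_right_comm u 2 m, hy2, ← hc0def, mul_inv_cancel₀ hc0]
    have hζq : ζ ^ (q - 1) = 1 := by
      rw [hζdef, mul_pow, inv_pow, pow_right_comm u 2 (q - 1), hu1, one_pow, hbq1, inv_one,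
        mul_one]
    have hζd : ζ ^ d1 = 1 := pow_gcd_eq_one' hζ0 hζm hζq
    set η : K := ζ ^ ((d1 + 1) / 2) with hηdef
    have hη0 : η ≠ 0 := pow_ne_zero _ hζ0
    have hη2 : η ^ 2 = ζ := by
      rw [hηdef, ← pow_mul]
      have he : (d1 + 1) / 2 * 2 = d1 + 1 := by rcases hd1odd with ⟨k, hk⟩; omega
      rw [he, pow_succ, hζd, one_mul]
    have hηd : η ^ d1 = 1 := by rw [hηdef, ← pow_mul, mul_comm, pow_mul, hζd, one_pow]
    have hηq : η ^ (q - 1) = 1 := by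
      obtain ⟨k, hk⟩ := hd1q
      rw [hk, pow_mul, hηd, one_pow]
    set w : K := u * η⁻¹ with hwdef
    have hw0 : w ≠ 0 := mul_ne_zero hu0 (inv_ne_zero hη0)
    have hw2 : w ^ 2 = b := by
      rw [hwdef, mul_pow, inv_pow, hη2, hζdef]
      rw [mul_inv, inv_inv, ← mul_assoc, mul_inv_cancel₀ (pow_ne_zero _ hu0), one_mul]
    have hwq : w ^ (q + 1) = b := by
      have he : w ^ (q + 1) = w ^ (q - 1) * w ^ 2 := by rw [← pow_add]; congr 1; omega
      rw [he, hw2, hwdef, mul_pow, inv_pow, hu1, hηq, inv_one, mul_one, one_mul]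
    have hτ : (u * w⁻¹) ^ m = 1 ∨ (u * w⁻¹) ^ m = -1 := by
      rw [← sq_eq_one_iff]
      rw [pow_right_comm, mul_pow, inv_pow, hw2, ← hζdef, hζm]
    rcases hτ with h1 | h1
    · refine (hmemSB _).mpr ⟨w, hwq, ?_⟩
      rw [mul_pow, inv_pow] at h1
      rw [mul_inv_eq_one₀ (pow_ne_zero _ hw0)] at h1
      exact h1.symm
    · refine (hmemSB _).mpr ⟨-w, ?_, ?_⟩
      · rw [hEvenq2.neg_pow, hwq]
      · rw [hmodd.neg_pow]
        rw [mul_pow, inv_pow] at h1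
        rw [mul_inv_eq_iff_eq_mul₀ (pow_ne_zero _ hw0), neg_one_mul] at h1
        exact h1.symm
  -- K5 : fixed points in SB lie in SA
  have hBA : ∀ y : K, y ∈ SB → y ^ 2 = c0 → y ∈ SA := by
    intro y hy hy2
    obtain ⟨v, hv1, rfl⟩ := (hmemSB y).mp hy
    have hv0 : v ≠ 0 := hB0 v hv1
    have hbq2 : b ^ (q + 1) = b ^ 2 := by rw [pow_succ, hbq, sq]
    set ζ : K := v ^ 2 * b⁻¹ with hζdef
    have hζ0 : ζ ≠ 0 := mul_ne_zero (pow_ne_zero _ hv0) (inv_ne_zero hb)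
    have hζm : ζ ^ m = 1 := by
      rw [hζdef, mul_pow, inv_pow, pow_right_comm v 2 m, hy2, ← hc0def, mul_inv_cancel₀ hc0]
    have hζq : ζ ^ (q + 1) = 1 := by
      rw [hζdef, mul_pow, inv_pow, pow_right_comm v 2 (q + 1), hv1, hbq2,
        mul_inv_cancel₀ (pow_ne_zero _ hb)]
    have hζd : ζ ^ d2 = 1 := pow_gcd_eq_one' hζ0 hζm hζq
    set η : K := ζ ^ ((d2 + 1) / 2) with hηdef
    have hη0 : η ≠ 0 := pow_ne_zero _ hζ0
    have hη2 : η ^ 2 = ζ := by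
      rw [hηdef, ← pow_mul]
      have he : (d2 + 1) / 2 * 2 = d2 + 1 := by rcases hd2odd with ⟨k, hk⟩; omega
      rw [he, pow_succ, hζd, one_mul]
    have hηd : η ^ d2 = 1 := by rw [hηdef, ← pow_mul, mul_comm, pow_mul, hζd, one_pow]
    have hηq : η ^ (q + 1) = 1 := by
      obtain ⟨k, hk⟩ := hd2q
      rw [hk, pow_mul, hηd, one_pow]
    set w : K := v * η⁻¹ with hwdef
    have hw0 : w ≠ 0 := mul_ne_zero hv0 (inv_ne_zero hη0)
    have hw2 : w ^ 2 = b := by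
      rw [hwdef, mul_pow, inv_pow, hη2, hζdef]
      rw [mul_inv, inv_inv, ← mul_assoc, mul_inv_cancel₀ (pow_ne_zero _ hv0), one_mul]
    have hwq : w ^ (q + 1) = b := by
      rw [hwdef, mul_pow, inv_pow, hv1, hηq, inv_one, mul_one]
    have hwq1 : w ^ (q - 1) = 1 := by
      have he : w ^ (q + 1) = w ^ (q - 1) * w ^ 2 := by rw [← pow_add]; congr 1; omega
      rw [hwq, hw2] at he
      have := mul_right_cancel₀ hb (by rw [← he, one_mul] : w ^ (q - 1) * b = 1 * b)
      exact this
    have hτ : (v * w⁻¹) ^ m = 1 ∨ (v * w⁻¹) ^ m = -1 := by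
      rw [← sq_eq_one_iff]
      rw [pow_right_comm, mul_pow, inv_pow, hw2, ← hζdef, hζm]
    rcases hτ with h1 | h1
    · refine (hmemSA _).mpr ⟨w, hwq1, ?_⟩
      rw [mul_pow, inv_pow] at h1
      rw [mul_inv_eq_one₀ (pow_ne_zero _ hw0)] at h1
      exact h1.symm
    · refine (hmemSA _).mpr ⟨-w, ?_, ?_⟩
      · rw [hEvenq1.neg_pow, hwq1]
      · rw [hmodd.neg_pow]
        rw [mul_pow, inv_pow] at h1
        rw [mul_inv_eq_iff_eq_mul₀ (pow_ne_zero _ hw0), neg_one_mul] at h1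
        exact h1.symm
  set S : Finset K := SA ∪ SB with hSdef
  set g : K → K := fun y => y + c0 * y⁻¹ with hgdef
  set T : Finset K := S.image g with hTdef
  have hS0 : ∀ y ∈ S, y ≠ 0 := by
    intro y hy; rcases Finset.mem_union.mp hy with h | h
    exacts [hSA0 y h, hSB0 y h]
  have hSσ : ∀ y ∈ S, c0 * y⁻¹ ∈ S := by
    intro y hy; rcases Finset.mem_union.mp hy with h | h
    · exact Finset.mem_union_left _ (hsa y h)
    · exact Finset.mem_union_right _ (hsb y h)
  have hgσ : ∀ y : K, y ≠ 0 → g (c0 * y⁻¹) = g y := by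
    intro y hy; simp only [hgdef]; rw [mul_inv, inv_inv, ← mul_assoc, mul_inv_cancel₀ hc0, one_mul, add_comm]
  have hpair : ∀ y z : K, y ≠ 0 → z ≠ 0 → g z = g y → z = y ∨ z = c0 * y⁻¹ := by
    intro y z hy hz hgz
    simp only [hgdef] at hgz
    have h2 : (z - y) * (z * y - c0) = 0 := by
      linear_combination (z * y) * hgz - (c0 * y) * mul_inv_cancel₀ hz + (c0 * z) * mul_inv_cancel₀ hy
    rcases mul_eq_zero.mp h2 with h | h
    · left; exact sub_eq_zero.mp h
    · right
      have hzy : z * y = c0 := sub_eq_zero.mp h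
      exact (eq_mul_inv_iff_mul_eq₀ hy).mpr hzy
  have hIsubS : ∀ y ∈ SA ∩ SB, y ∈ S := fun y hy =>
    Finset.mem_union_left _ (Finset.mem_inter.mp hy).1
  have hkey : ∀ t ∈ T, (S.filter fun y => g y = t).card
      + ((SA ∩ SB).filter fun y => g y = t).card = 2 := by
    intro t ht
    obtain ⟨y, hyS, hyt⟩ := Finset.mem_image.mp ht
    have hy0 := hS0 y hyS
    by_cases hfix : y ^ 2 = c0
    · have hσy : c0 * y⁻¹ = y := by
        rw [← hfix, sq]
        exact mul_inv_cancel_right₀ hy0 y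
      have hfs : S.filter (fun z => g z = t) = {y} := by
        ext z
        simp only [Finset.mem_filter, Finset.mem_singleton]
        constructor
        · rintro ⟨hzS, hzt⟩
          rcases hpair y z hy0 (hS0 z hzS) (hzt.trans hyt.symm) with h | h
          · exact h
          · rw [h, hσy]
        · rintro rfl; exact ⟨hyS, hyt⟩
      have hyAB : y ∈ SA ∩ SB := by
        rcases Finset.mem_union.mp hyS with h | h
        · exact Finset.mem_inter.mpr ⟨h, hAB y h hfix⟩
        · exact Finset.mem_inter.mpr ⟨hBA y h hfix, h⟩
      have hfs2 : (SA ∩ SB).filter (fun z => g z = t) = {y} := by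
        ext z
        simp only [Finset.mem_filter, Finset.mem_singleton]
        constructor
        · rintro ⟨hzS, hzt⟩
          rcases hpair y z hy0 (hS0 z (hIsubS z hzS)) (hzt.trans hyt.symm) with h | h
          · exact h
          · rw [h, hσy]
        · rintro rfl; exact ⟨hyAB, hyt⟩
      rw [hfs, hfs2]
      simp
    · have hy'S : c0 * y⁻¹ ∈ S := hSσ y hyS
      have hy'0 : c0 * y⁻¹ ≠ 0 := hS0 _ hy'S
      have hyy' : c0 * y⁻¹ ≠ y := by
        intro h
        apply hfix
        rw [sq, ← (eq_mul_inv_iff_mul_eq₀ hy0).mp h.symm]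
      have hfs : S.filter (fun z => g z = t) = {y, c0 * y⁻¹} := by
        ext z
        simp only [Finset.mem_filter, Finset.mem_insert, Finset.mem_singleton]
        constructor
        · rintro ⟨hzS, hzt⟩
          exact hpair y z hy0 (hS0 z hzS) (hzt.trans hyt.symm)
        · rintro (rfl | rfl)
          · exact ⟨hyS, hyt⟩
          · exact ⟨hy'S, (hgσ y hy0).trans hyt⟩
      have hfs2 : (SA ∩ SB).filter (fun z => g z = t) = ∅ := by
        ext z
        simp only [Finset.mem_filter, Finset.notMem_empty, iff_false, not_and]
        intro hzAB hzt
        have hz2 : z ^ 2 = c0 :=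
          hinter z (Finset.mem_inter.mp hzAB).1 (Finset.mem_inter.mp hzAB).2
        rcases hpair y z hy0 (hS0 z (hIsubS z hzAB)) (hzt.trans hyt.symm) with h | h
        · exact hfix (h ▸ hz2)
        · apply hfix
          rw [h, mul_pow, inv_pow, sq c0] at hz2
          have hy2 : y ^ 2 ≠ 0 := pow_ne_zero _ hy0
          rw [mul_assoc] at hz2
          have h3 : c0 * (y ^ 2)⁻¹ = 1 := mul_left_cancel₀ hc0 (by rw [hz2, mul_one])
          exact ((mul_inv_eq_one₀ hy2).mp h3).symm
      rw [hfs, hfs2]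
      rw [Finset.card_insert_of_notMem (by simpa using fun h => hyy' h.symm), Finset.card_singleton]
      simp
  have hsum1 : S.card = ∑ t ∈ T, (S.filter fun y => g y = t).card :=
    Finset.card_eq_sum_card_fiberwise (fun y hy => Finset.mem_image_of_mem g hy)
  have hsum2 : (SA ∩ SB).card = ∑ t ∈ T, ((SA ∩ SB).filter fun y => g y = t).card :=
    Finset.card_eq_sum_card_fiberwise (fun y hy => Finset.mem_image_of_mem g (hIsubS y hy))
  have hTcard : SA.card + SB.card = 2 * T.card := by
    rw [← Finset.card_union_add_card_inter, ← hSdef, hsum1, hsum2, ← Finset.sum_add_distrib,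
      Finset.sum_congr rfl hkey, Finset.sum_const, smul_eq_mul, mul_comm]
  -- fibers of the power map
  have hfibA : ∀ y ∈ SA, (A.filter fun v => v ^ m = y).card = d1 := by
    intro y hy
    obtain ⟨u, hu1, huy⟩ := (hmemSA y).mp hy
    have hu0 : u ≠ 0 := hA0 u hu1
    have heq : A.filter (fun v => v ^ m = y)
        = ((X ^ d1 - C 1 : K[X]).roots.toFinset).image (· * u) := by
      ext v
      simp only [Finset.mem_filter, Finset.mem_image]
      constructor
      · rintro ⟨hvA, hvm⟩
        refine ⟨v * u⁻¹, ?_, by exact inv_mul_cancel_right₀ hu0 v⟩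
        rw [mem_rootsF hd1pos]
        apply pow_gcd_eq_one' (mul_ne_zero (hA0 v ((hmemA v).mp hvA)) (inv_ne_zero hu0))
        · rw [mul_pow, inv_pow, hvm, ← huy, mul_inv_cancel₀ (pow_ne_zero _ hu0)]
        · rw [mul_pow, inv_pow, (hmemA v).mp hvA, hu1, inv_one, mul_one]
      · rintro ⟨ζ, hζ, rfl⟩
        rw [mem_rootsF hd1pos] at hζ
        have hζq : ζ ^ (q - 1) = 1 := by
          obtain ⟨k, hk⟩ := hd1q; rw [hk, pow_mul, hζ, one_pow]
        have hζm : ζ ^ m = 1 := by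
          obtain ⟨k, hk⟩ := hd1m; rw [hk, pow_mul, hζ, one_pow]
        constructor
        · rw [hmemA, mul_pow, hζq, hu1, one_mul]
        · rw [mul_pow, hζm, one_mul, huy]
    rw [heq, Finset.card_image_of_injective _ (mul_left_injective₀ hu0),
      card_rootsF hd1pos (hcast d1 (Or.inl hd1q) hd1pos) one_ne_zero]
  have hfibB : ∀ y ∈ SB, (B.filter fun v => v ^ m = y).card = d2 := by
    intro y hy
    obtain ⟨u, hu1, huy⟩ := (hmemSB y).mp hy
    have hu0 : u ≠ 0 := hB0 u hu1
    have heq : B.filter (fun v => v ^ m = y)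
        = ((X ^ d2 - C 1 : K[X]).roots.toFinset).image (· * u) := by
      ext v
      simp only [Finset.mem_filter, Finset.mem_image]
      constructor
      · rintro ⟨hvB, hvm⟩
        refine ⟨v * u⁻¹, ?_, by exact inv_mul_cancel_right₀ hu0 v⟩
        rw [mem_rootsF hd2pos]
        apply pow_gcd_eq_one' (mul_ne_zero (hB0 v ((hmemB v).mp hvB)) (inv_ne_zero hu0))
        · rw [mul_pow, inv_pow, hvm, ← huy, mul_inv_cancel₀ (pow_ne_zero _ hu0)]
        · rw [mul_pow, inv_pow, (hmemB v).mp hvB, hu1, mul_inv_cancel₀ hb]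
      · rintro ⟨ζ, hζ, rfl⟩
        rw [mem_rootsF hd2pos] at hζ
        have hζq : ζ ^ (q + 1) = 1 := by
          obtain ⟨k, hk⟩ := hd2q; rw [hk, pow_mul, hζ, one_pow]
        have hζm : ζ ^ m = 1 := by
          obtain ⟨k, hk⟩ := hd2m; rw [hk, pow_mul, hζ, one_pow]
        constructor
        · rw [hmemB, mul_pow, hζq, hu1, one_mul]
        · rw [mul_pow, hζm, one_mul, huy]
    rw [heq, Finset.card_image_of_injective _ (mul_left_injective₀ hu0),
      card_rootsF hd2pos (hcast d2 (Or.inr hd2q) hd2pos) one_ne_zero]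
  have hApow : SA.card * d1 = q - 1 := by
    have h := Finset.card_eq_sum_card_image (fun v : K => v ^ m) A
    rw [← hSAdef] at h
    rw [Finset.sum_congr rfl hfibA, Finset.sum_const, smul_eq_mul] at h
    rw [← h]
    exact hcardA
  have hBpow : SB.card * d2 = q + 1 := by
    have h := Finset.card_eq_sum_card_image (fun v : K => v ^ m) B
    rw [← hSBdef] at h
    rw [Finset.sum_congr rfl hfibB, Finset.sum_const, smul_eq_mul] at h
    rw [← h]
    exact hcardB
  -- fixed points of Frobenius
  have hfixed : ∀ x : K, x ^ q = x → ∃ c : F, ι c = x := by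
    intro x hx
    by_cases hx0 : x = 0
    · exact ⟨0, by rw [map_zero, hx0]⟩
    have hx1 : x ^ (q - 1) = 1 := by
      have h4 : x ^ (q - 1) * x = 1 * x := by
        rw [one_mul, ← pow_succ, (by omega : q - 1 + 1 = q)]
        exact hx
      exact mul_right_cancel₀ hx0 h4
    have hImg : (Finset.univ.image (fun c : F => ι c)).erase 0 = A := by
      apply Finset.eq_of_subset_of_card_le
      · intro z hz
        obtain ⟨hz0, hz'⟩ := Finset.mem_erase.mp hz
        obtain ⟨c, _, rfl⟩ := Finset.mem_image.mp hz'
        have hc0 : c ≠ 0 := fun h => hz0 (by rw [h, map_zero])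
        rw [hmemA, ← map_pow, ← map_one ι]
        congr 1
        rw [← hq]
        exact FiniteField.pow_card_sub_one_eq_one c hc0
      · rw [hcardA, Finset.card_erase_of_mem
          (Finset.mem_image.mpr ⟨0, Finset.mem_univ 0, map_zero ι⟩),
          Finset.card_image_of_injective _ hιinj, Finset.card_univ, hq]
    have hxA : x ∈ A := (hmemA x).mpr hx1
    rw [← hImg] at hxA
    obtain ⟨_, hx'⟩ := Finset.mem_erase.mp hxA
    obtain ⟨c, _, hc⟩ := Finset.mem_image.mp hx'
    exact ⟨c, hc⟩
  have hev : ∀ c : F, (Polynomial.dickson 1 b m).eval (ι c)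
      = ι ((Polynomial.dickson 1 a m).eval c) := by
    intro c
    rw [hbdef, ← Polynomial.map_dickson, Polynomial.eval_map, Polynomial.eval₂_hom]
  -- the value set corresponds to T
  have himg : (Finset.univ.image fun c : F => (Polynomial.dickson 1 a m).eval c).image ι = T := by
    apply Finset.Subset.antisymm
    · intro z hz
      obtain ⟨w, hw, rfl⟩ := Finset.mem_image.mp hz
      obtain ⟨c, _, rfl⟩ := Finset.mem_image.mp hw
      obtain ⟨u, hu⟩ := IsAlgClosed.exists_root (C 1 * X ^ 2 + C (-(ι c)) * X + C b) (by
        rw [Polynomial.degree_quadratic one_ne_zero]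
        norm_num)
      have hu0 : u ≠ 0 := by
        rintro rfl
        simp only [IsRoot, Polynomial.eval_add, Polynomial.eval_mul, Polynomial.eval_pow,
          Polynomial.eval_C, Polynomial.eval_X, one_mul, mul_zero, ne_eq,
          zero_pow, add_zero, zero_add] at hu
        exact hb (by linear_combination hu)
      have hroot : u ^ 2 - ι c * u + b = 0 := by
        have h := hu
        simp only [IsRoot, Polynomial.eval_add, Polynomial.eval_mul, Polynomial.eval_pow,
          Polynomial.eval_C, Polynomial.eval_X, one_mul, neg_mul] at h
        linear_combination h
      have hcu : ι c = u + b * u⁻¹ := by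
        linear_combination (-u⁻¹) * hroot + (u - ι c) * mul_inv_cancel₀ hu0
      have hcq : (ι c) ^ q = ι c := by
        rw [← map_pow]
        congr 1
        rw [← hq]
        exact FiniteField.pow_card c
      have hunion : u ^ (q - 1) = 1 ∨ u ^ (q + 1) = b := by
        have h1 : u ^ q + b * (u ^ q)⁻¹ = u + b * u⁻¹ := by
          have h2 := hcq
          rw [hcu, frob, mul_pow, inv_pow, hbq] at h2
          exact h2
        have hq0 : u ^ q ≠ 0 := pow_ne_zero _ hu0
        have hfac : (u ^ q - u) * (u ^ q * u - b) = 0 := by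
          linear_combination (u ^ q * u) * h1 - (b * u) * mul_inv_cancel₀ hq0 + (b * u ^ q) * mul_inv_cancel₀ hu0
        rcases mul_eq_zero.mp hfac with h | h
        · left
          have h5 : u ^ q = u := sub_eq_zero.mp h
          have h4 : u ^ (q - 1) * u = 1 * u := by
            rw [one_mul, ← pow_succ, (by omega : q - 1 + 1 = q)]
            exact h5
          exact mul_right_cancel₀ hu0 h4
        · right
          have h5 : u ^ q * u = b := sub_eq_zero.mp h
          rw [← pow_succ] at h5
          exact h5
      have hyS : u ^ m ∈ S := by
        rcases hunion with h | h
        · exact Finset.mem_union_left _ ((hmemSA _).mpr ⟨u, h, rfl⟩)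
        · exact Finset.mem_union_right _ ((hmemSB _).mpr ⟨u, h, rfl⟩)
      refine Finset.mem_image.mpr ⟨u ^ m, hyS, ?_⟩
      show g (u ^ m) = ι ((Polynomial.dickson 1 a m).eval c)
      rw [← hev c, hcu, dickson_eval_add' b m u hu0]
      simp only [hgdef]
      rw [mul_pow, inv_pow, ← hc0def]
    · intro t ht
      obtain ⟨y, hyS, rfl⟩ := Finset.mem_image.mp ht
      have hcase : ∃ u : K, u ≠ 0 ∧ u ^ m = y ∧ (u ^ q = u ∨ u ^ (q + 1) = b) := by
        rcases Finset.mem_union.mp hyS with h | h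
        · obtain ⟨u, hu1, huy⟩ := (hmemSA y).mp h
          refine ⟨u, hA0 u hu1, huy, Or.inl ?_⟩
          rw [(by omega : q = q - 1 + 1), pow_succ, hu1, one_mul]
        · obtain ⟨u, hu1, huy⟩ := (hmemSB y).mp h
          exact ⟨u, hB0 u hu1, huy, Or.inr hu1⟩
      obtain ⟨u, hu0, huy, hucase⟩ := hcase
      have hcufix : (u + b * u⁻¹) ^ q = u + b * u⁻¹ := by
        rw [frob, mul_pow, inv_pow, hbq]
        rcases hucase with h | h
        · rw [h]
        · have huq : u ^ q = b * u⁻¹ := by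
            rw [pow_succ] at h
            rw [eq_mul_inv_iff_mul_eq₀ hu0]
            exact h
          rw [huq, mul_inv, inv_inv, ← mul_assoc, mul_inv_cancel₀ hb, one_mul]
          exact add_comm _ _
      obtain ⟨c, hc⟩ := hfixed _ hcufix
      refine Finset.mem_image.mpr ⟨(Polynomial.dickson 1 a m).eval c,
        Finset.mem_image.mpr ⟨c, Finset.mem_univ c, rfl⟩, ?_⟩
      show ι ((Polynomial.dickson 1 a m).eval c) = g y
      rw [← hev c, hc, dickson_eval_add' b m u hu0]
      simp only [hgdef]
      rw [mul_pow, inv_pow, huy, ← hc0def]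
  -- final arithmetic
  have hVT : (Finset.univ.image fun c : F => (Polynomial.dickson 1 a m).eval c).card = T.card := by
    rw [← himg, Finset.card_image_of_injective _ hιinj]
  rw [hVT]
  have hd1Q : (d1 : ℚ) ≠ 0 := Nat.cast_ne_zero.mpr (by omega)
  have hd2Q : (d2 : ℚ) ≠ 0 := Nat.cast_ne_zero.mpr (by omega)
  have h1 : (SA.card : ℚ) * d1 = (q : ℚ) - 1 := by
    have h := congrArg (fun k : ℕ => (k : ℚ)) hApow
    rw [Nat.cast_mul, Nat.cast_sub (by omega : 1 ≤ q)] at h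
    simpa using h
  have h2 : (SB.card : ℚ) * d2 = (q : ℚ) + 1 := by
    have h := congrArg (fun k : ℕ => (k : ℚ)) hBpow
    rw [Nat.cast_mul, Nat.cast_add] at h
    simpa using h
  have hA' : (SA.card : ℚ) = ((q : ℚ) - 1) / d1 := by
    rw [eq_div_iff hd1Q]; exact h1
  have hB' : (SB.card : ℚ) = ((q : ℚ) + 1) / d2 := by
    rw [eq_div_iff hd2Q]; exact h2
  have hTQ : (T.card : ℚ) = ((SA.card : ℚ) + (SB.card : ℚ)) / 2 := by
    rw [eq_div_iff (two_ne_zero)]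
    rw [mul_comm]
    exact_mod_cast hTcard.symm
  rw [hTQ, hA', hB']
  field_simp
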